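/- Assume A is three times continuously differentiable on ℝⁿ∖{0}. Suppose (λ*, v*) is an eigenpair with ‖v*‖₂ = 1, σ ≠ λ*, and J(v*) − σI is invertible. Let s = +1 if σ < λ* and s = −1 if σ > λ*. Then, as v → v*, ‖φ(v) − s·v* − |λ* − σ|(I − v*v*ᵀ)(J(v*) − σI)⁻¹(v − v*)‖₂ = O(‖v − v*‖₂²). -/

import Mathlib

open Matrix Asymptotics Topology
open scoped RealInnerProductSpace

noncomputable def mvCLM {ι : Type*} [Fintype ι] [DecidableEq ι] (M : Matrix ι ι ℝ) :
    EuclideanSpace ℝ ι →L[ℝ] EuclideanSpace ℝ ι :=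
  LinearMap.toContinuousLinearMap (Matrix.toEuclideanLin M)

noncomputable def invitPsi {n : ℕ} (J : EuclideanSpace ℝ (Fin n) → Matrix (Fin n) (Fin n) ℝ)
    (σ : ℝ) (v : EuclideanSpace ℝ (Fin n)) : EuclideanSpace ℝ (Fin n) :=
  mvCLM ((J v - σ • 1)⁻¹) v

noncomputable def invitPhi {n : ℕ} (J : EuclideanSpace ℝ (Fin n) → Matrix (Fin n) (Fin n) ℝ)
    (σ : ℝ) (v : EuclideanSpace ℝ (Fin n)) : EuclideanSpace ℝ (Fin n) :=
  ‖invitPsi J σ v‖⁻¹ • invitPsi J σ v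

noncomputable def rayQuot {n : ℕ} (A : EuclideanSpace ℝ (Fin n) → Matrix (Fin n) (Fin n) ℝ)
    (v : EuclideanSpace ℝ (Fin n)) : ℝ :=
  ⟪v, mvCLM (A v) v⟫ / ⟪v, v⟫

section mvlemmas
variable {ι : Type*} [Fintype ι] [DecidableEq ι]

lemma mvCLM_apply (M : Matrix ι ι ℝ) (v : EuclideanSpace ℝ ι) (i : ι) :
    mvCLM M v i = ∑ j, M i j * v j := rfl

lemma mvCLM_one : mvCLM (1 : Matrix ι ι ℝ) = ContinuousLinearMap.id ℝ _ := by
  ext v i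
  simp [mvCLM_apply, Matrix.one_apply]

lemma mvCLM_mul (M N : Matrix ι ι ℝ) : mvCLM (M * N) = (mvCLM M).comp (mvCLM N) := by
  ext v i
  simp [mvCLM_apply, Matrix.mul_apply, Finset.sum_mul, Finset.mul_sum]
  rw [Finset.sum_comm]
  congr 1; ext j; congr 1; ext k; ring

lemma mvCLM_add (M N : Matrix ι ι ℝ) : mvCLM (M + N) = mvCLM M + mvCLM N := by
  ext v i; simp [mvCLM_apply, Matrix.add_apply, add_mul, Finset.sum_add_distrib]

lemma mvCLM_sub (M N : Matrix ι ι ℝ) : mvCLM (M - N) = mvCLM M - mvCLM N := by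
  ext v i; simp [mvCLM_apply, Matrix.sub_apply, sub_mul, Finset.sum_sub_distrib]

lemma mvCLM_smul (c : ℝ) (M : Matrix ι ι ℝ) : mvCLM (c • M) = c • mvCLM M := by
  ext v i; simp [mvCLM_apply, Matrix.smul_apply, Finset.mul_sum, mul_assoc]

lemma mvCLM_zero : mvCLM (0 : Matrix ι ι ℝ) = 0 := by
  ext v i; simp [mvCLM_apply]

lemma mvCLM_injective : Function.Injective (mvCLM (ι := ι)) := by
  intro M N h
  have : Matrix.toEuclideanLin M = Matrix.toEuclideanLin N := by
    ext v
    exact congrFun (congrArg (fun (f : EuclideanSpace ℝ ι →L[ℝ] EuclideanSpace ℝ ι) =>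
      (f v : ι → ℝ)) h) _
  exact Matrix.toEuclideanLin.injective this

lemma mvCLM_surjective (W : EuclideanSpace ℝ ι →L[ℝ] EuclideanSpace ℝ ι) :
    ∃ M, mvCLM M = W := by
  refine ⟨Matrix.toEuclideanLin.symm W.toLinearMap, ?_⟩
  ext v
  simp [mvCLM]

lemma mvCLM_ring_inverse (M : Matrix ι ι ℝ) :
    mvCLM M⁻¹ = Ring.inverse (mvCLM M) := by
  by_cases h : IsUnit M.det
  · have hM : IsUnit M := (Matrix.isUnit_iff_isUnit_det M).mpr h
    have h1 : mvCLM M * mvCLM M⁻¹ = 1 := by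
      rw [ContinuousLinearMap.mul_def, ← mvCLM_mul, Matrix.mul_nonsing_inv M h]
      ext v; simp [mvCLM_one]
    have h2 : mvCLM M⁻¹ * mvCLM M = 1 := by
      rw [ContinuousLinearMap.mul_def, ← mvCLM_mul, Matrix.nonsing_inv_mul M h]
      ext v; simp [mvCLM_one]
    have : Ring.inverse (mvCLM M) = mvCLM M⁻¹ := by
      exact Ring.inverse_unit ⟨mvCLM M, mvCLM M⁻¹, h1, h2⟩
    exact this.symm
  · rw [Matrix.nonsing_inv_apply_not_isUnit M h, mvCLM_zero, Ring.inverse_non_unit]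
    intro hu
    apply h
    obtain ⟨U, hU⟩ := hu
    obtain ⟨N, hN⟩ := mvCLM_surjective ((U⁻¹ : (EuclideanSpace ℝ ι →L[ℝ]
      EuclideanSpace ℝ ι)ˣ) : EuclideanSpace ℝ ι →L[ℝ] EuclideanSpace ℝ ι)
    have hMN : M * N = 1 := by
      apply mvCLM_injective
      rw [mvCLM_mul, hN, mvCLM_one, ← ContinuousLinearMap.mul_def, ← hU]
      rw [U.mul_inv]; rfl
    have hNM : N * M = 1 := by
      apply mvCLM_injective
      rw [mvCLM_mul, hN, mvCLM_one, ← ContinuousLinearMap.mul_def, ← hU]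
      rw [U.inv_mul]; rfl
    exact (Matrix.isUnit_iff_isUnit_det M).mp ⟨⟨M, N, hMN, hNM⟩, rfl⟩

lemma mvCLM_vecMulVec (x y v : EuclideanSpace ℝ ι) :
    mvCLM (Matrix.vecMulVec x y) v = ⟪y, v⟫ • x := by
  ext i
  simp [mvCLM_apply, Matrix.vecMulVec_apply, PiLp.inner_apply, RCLike.inner_apply,
    Finset.sum_mul, PiLp.smul_apply, smul_eq_mul]
  exact Finset.sum_congr rfl fun j _ => by ring

end mvlemmas

noncomputable def mvL (n : ℕ) : (Fin n → Fin n → ℝ) →L[ℝ]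
    (EuclideanSpace ℝ (Fin n) →L[ℝ] EuclideanSpace ℝ (Fin n)) :=
  LinearMap.toContinuousLinearMap
    { toFun := fun M => mvCLM (Matrix.of M)
      map_add' := fun M N => mvCLM_add (Matrix.of M) (Matrix.of N)
      map_smul' := fun c M => mvCLM_smul c (Matrix.of M) }

lemma taylor_sq {E F : Type*} [NormedAddCommGroup E] [NormedSpace ℝ E]
    [NormedAddCommGroup F] [NormedSpace ℝ F] {f : E → F} {x : E}
    (hf : ContDiffAt ℝ 2 f x) :
    (fun y => f y - f x - fderiv ℝ f x (y - x)) =O[𝓝 x] (fun y => ‖y - x‖ ^ 2) := by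
  have hf' : ContDiffAt ℝ 1 (fderiv ℝ f) x := hf.fderiv_right (by norm_num)
  obtain ⟨K, t, ht, hlip⟩ := hf'.exists_lipschitzOnWith
  have hdiff : ∀ᶠ y in 𝓝 x, DifferentiableAt ℝ f y := by
    have := hf.eventually (n := 2) (by norm_num)
    exact this.mono fun y hy => hy.differentiableAt (by norm_num)
  obtain ⟨ε, hε, hball⟩ := Metric.mem_nhds_iff.mp (Filter.inter_mem ht hdiff)
  rw [isBigO_iff]
  refine ⟨K, Filter.eventually_of_mem (Metric.ball_mem_nhds x (half_pos hε)) fun y hy => ?_⟩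
  have hyx : ‖y - x‖ < ε / 2 := by
    rw [← dist_eq_norm]; exact hy
  have hsub : Metric.closedBall x ‖y - x‖ ⊆ Metric.ball x ε := by
    intro z hz
    calc dist z x ≤ ‖y - x‖ := hz
    _ < ε := lt_trans hyx (half_lt_self hε)
  have key : ∀ z ∈ Metric.closedBall x ‖y - x‖,
      HasFDerivWithinAt (fun w => f w - fderiv ℝ f x w)
        (fderiv ℝ f z - fderiv ℝ f x) (Metric.closedBall x ‖y - x‖) z := by
    intro z hz
    have hz' := hball (hsub hz)
    exact ((hz'.2.hasFDerivAt.sub ((fderiv ℝ f x).hasFDerivAt)).hasFDerivWithinAt)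
  have bound : ∀ z ∈ Metric.closedBall x ‖y - x‖,
      ‖fderiv ℝ f z - fderiv ℝ f x‖ ≤ K * ‖y - x‖ := by
    intro z hz
    have hzt : z ∈ t := (hball (hsub hz)).1
    have hxt : x ∈ t := (hball (Metric.mem_ball_self hε)).1
    have := hlip.dist_le_mul z hzt x hxt
    rw [dist_eq_norm] at this
    calc ‖fderiv ℝ f z - fderiv ℝ f x‖ ≤ K * dist z x := this
    _ ≤ K * ‖y - x‖ := by
        exact mul_le_mul_of_nonneg_left hz K.coe_nonneg
  have hmem_y : y ∈ Metric.closedBall x ‖y - x‖ := by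
    simp [Metric.mem_closedBall, dist_eq_norm]
  have hmem_x : x ∈ Metric.closedBall x ‖y - x‖ := by
    simp [Metric.mem_closedBall]
  have := (convex_closedBall x ‖y - x‖).norm_image_sub_le_of_norm_hasFDerivWithin_le
    key bound hmem_x hmem_y
  have heq : (f y - fderiv ℝ f x y) - (f x - fderiv ℝ f x x)
      = f y - f x - fderiv ℝ f x (y - x) := by
    rw [map_sub]; abel
  rw [heq] at this
  calc ‖f y - f x - fderiv ℝ f x (y - x)‖ ≤ K * ‖y - x‖ * ‖y - x‖ := this
  _ = K * ‖y - x‖ ^ 2 := by ring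
  _ ≤ K * ‖‖y - x‖ ^ 2‖ := by rw [norm_pow, norm_norm]


set_option maxHeartbeats 1000000 in
set_option synthInstance.maxHeartbeats 100000 in
/-- First-order expansion of `φ` near an eigenvector: with
`s = +1` if `σ < λ*` and `s = −1` if `σ > λ*`, one has, as `v → v*`,
`φ(v) − s v* − |λ* − σ|(I − v*v*ᵀ)(J(v*) − σI)⁻¹(v − v*) = O(‖v − v*‖²)`. -/
theorem stmt9 {n : ℕ} (hn : 1 ≤ n)
    (A J : EuclideanSpace ℝ (Fin n) → Matrix (Fin n) (Fin n) ℝ)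
    (hsymm : ∀ v : EuclideanSpace ℝ (Fin n), v ≠ 0 → (A v).IsSymm)
    (hsmooth : ContDiffOn ℝ 3 (fun w i j => A w i j) {(0 : EuclideanSpace ℝ (Fin n))}ᶜ)
    (hscale : ∀ α : ℝ, α ≠ 0 → ∀ v : EuclideanSpace ℝ (Fin n), v ≠ 0 → A (α • v) = A v)
    (hJ : ∀ v : EuclideanSpace ℝ (Fin n), v ≠ 0 →
      HasFDerivAt (fun w => mvCLM (A w) w) (mvCLM (J v)) v)
    (lam σ : ℝ) (vstar : EuclideanSpace ℝ (Fin n)) (hnorm : ‖vstar‖ = 1)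
    (heig : mvCLM (A vstar) vstar = lam • vstar) (hσ : σ ≠ lam)
    (hinv : IsUnit (J vstar - σ • (1 : Matrix (Fin n) (Fin n) ℝ)))
    (s : ℝ) (hs₁ : σ < lam → s = 1) (hs₂ : lam < σ → s = -1) :
    (fun v => invitPhi J σ v - s • vstar -
        mvCLM (|lam - σ| •
          ((1 - Matrix.vecMulVec vstar vstar) * (J vstar - σ • 1)⁻¹)) (v - vstar))
      =O[nhds vstar] (fun v => ‖v - vstar‖ ^ 2) := by
  classical
  have hvne : vstar ≠ 0 := by
    intro h; rw [h, norm_zero] at hnorm; exact one_ne_zero hnorm.symm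
  have hopen : IsOpen ({(0 : EuclideanSpace ℝ (Fin n))}ᶜ) := isOpen_compl_singleton
  set F : EuclideanSpace ℝ (Fin n) → EuclideanSpace ℝ (Fin n) :=
    fun v => mvCLM (A v) v with hF
  -- F is C³ away from 0
  have hAc : ContDiffOn ℝ 3 (fun v => mvCLM (A v)) {(0 : EuclideanSpace ℝ (Fin n))}ᶜ := by
    have h1 := (mvL n).contDiff.comp_contDiffOn hsmooth
    exact h1.congr (fun v _ => rfl)
  have hFs : ContDiffOn ℝ 3 F {(0 : EuclideanSpace ℝ (Fin n))}ᶜ :=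
    hAc.clm_apply contDiffOn_id
  set L : EuclideanSpace ℝ (Fin n) → (EuclideanSpace ℝ (Fin n) →L[ℝ] EuclideanSpace ℝ (Fin n)) :=
    fderiv ℝ F with hLdef
  have hL2 : ContDiffOn ℝ 2 L {(0 : EuclideanSpace ℝ (Fin n))}ᶜ :=
    hFs.fderiv_of_isOpen hopen (by norm_num)
  have hLJ : ∀ v, v ≠ 0 → L v = mvCLM (J v) := fun v hv => (hJ v hv).fderiv
  have hLc : ContDiffAt ℝ 2 L vstar := hL2.contDiffAt (hopen.mem_nhds hvne)
  have hLd : DifferentiableAt ℝ L vstar := hLc.differentiableAt (by norm_num)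
  -- Euler identity
  have hEuler : ∀ v : EuclideanSpace ℝ (Fin n), v ≠ 0 → L v v = F v := by
    intro v hv
    have hFd : HasFDerivAt F (L v) v := by rw [hLJ v hv]; exact hJ v hv
    have hsm : HasDerivAt (fun t : ℝ => t • v) v 1 := by
      simpa using (hasDerivAt_id (1 : ℝ)).smul_const v
    have g1 : HasDerivAt (fun t : ℝ => F (t • v)) (L v v) 1 := by
      have h1 : HasFDerivAt F (L v) ((fun t : ℝ => t • v) 1) := by simpa using hFd
      exact h1.comp_hasDerivAt 1 hsm
    have g2 : HasDerivAt (fun t : ℝ => F (t • v)) (F v) 1 := by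
      have base : HasDerivAt (fun t : ℝ => t • F v) (F v) 1 := by
        simpa using (hasDerivAt_id (1 : ℝ)).smul_const (F v)
      apply base.congr_of_eventuallyEq
      have hne : ∀ᶠ t in 𝓝 (1 : ℝ), t ≠ 0 := eventually_ne_nhds one_ne_zero
      filter_upwards [hne] with t ht
      show F (t • v) = t • F v
      rw [hF]
      simp only
      rw [hscale t ht v hv]
      exact (mvCLM (A v)).map_smul t v
    exact g1.unique g2
  -- second derivative kills vstar
  set DL := fderiv ℝ L vstar with hDLdef
  have hDL0 : ∀ h, DL h vstar = 0 := by
    have hclm : HasFDerivAt (fun v => L v v)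
        ((L vstar).comp (ContinuousLinearMap.id ℝ _) + DL.flip vstar) vstar :=
      hLd.hasFDerivAt.clm_apply (hasFDerivAt_id vstar)
    have hFd : HasFDerivAt F (L vstar) vstar := by rw [hLJ vstar hvne]; exact hJ vstar hvne
    have hev : (fun v => L v v) =ᶠ[𝓝 vstar] F := by
      filter_upwards [hopen.mem_nhds hvne] with v hv
      exact hEuler v hv
    have hclm2 : HasFDerivAt (fun v => L v v) (L vstar) vstar := by
      exact hFd.congr_of_eventuallyEq hev
    have heqT := hclm.unique hclm2
    intro h
    have h2 := DFunLike.congr_fun heqT h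
    simp only [ContinuousLinearMap.add_apply, ContinuousLinearMap.comp_apply,
      ContinuousLinearMap.coe_id', id_eq, ContinuousLinearMap.flip_apply] at h2
    rwa [add_eq_left] at h2
  -- the unit u
  set u : EuclideanSpace ℝ (Fin n) →L[ℝ] EuclideanSpace ℝ (Fin n) :=
    L vstar - σ • 1 with hudef
  have hdet : IsUnit (J vstar - σ • (1 : Matrix (Fin n) (Fin n) ℝ)).det :=
    (Matrix.isUnit_iff_isUnit_det _).mp hinv
  have h_u_eq : mvCLM (J vstar - σ • (1 : Matrix (Fin n) (Fin n) ℝ)) = u := by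
    rw [hudef, mvCLM_sub, mvCLM_smul, mvCLM_one, hLJ vstar hvne]
    rfl
  have hu_is : IsUnit u := by
    refine ⟨⟨u, mvCLM ((J vstar - σ • (1 : Matrix (Fin n) (Fin n) ℝ))⁻¹), ?_, ?_⟩, rfl⟩
    · rw [← h_u_eq, ContinuousLinearMap.mul_def, ← mvCLM_mul,
        Matrix.mul_nonsing_inv _ hdet, mvCLM_one]; rfl
    · rw [← h_u_eq, ContinuousLinearMap.mul_def, ← mvCLM_mul,
        Matrix.nonsing_inv_mul _ hdet, mvCLM_one]; rfl
  obtain ⟨U, hU⟩ := hu_is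
  have hu_is : IsUnit u := ⟨U, hU⟩
  set G : EuclideanSpace ℝ (Fin n) → (EuclideanSpace ℝ (Fin n) →L[ℝ] EuclideanSpace ℝ (Fin n)) :=
    fun v => Ring.inverse (L v - σ • 1) with hGdef
  set c : ℝ := (lam - σ)⁻¹ with hcdef
  have hlamσ : lam - σ ≠ 0 := sub_ne_zero_of_ne (Ne.symm hσ)
  have hc : c ≠ 0 := inv_ne_zero hlamσ
  have hLvv : L vstar vstar = lam • vstar := by
    rw [hEuler vstar hvne, hF]
    exact heig
  have huvst : u vstar = (lam - σ) • vstar := by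
    rw [hudef]
    simp only [ContinuousLinearMap.sub_apply, ContinuousLinearMap.smul_apply,
      ContinuousLinearMap.one_apply, hLvv, sub_smul]
  have hGu : G vstar = ((U⁻¹ : _ˣ) : EuclideanSpace ℝ (Fin n) →L[ℝ] EuclideanSpace ℝ (Fin n)) := by
    rw [hGdef]
    simp only
    rw [← hudef, ← hU, Ring.inverse_unit]
  have hGvst : G vstar vstar = c • vstar := by
    have h1 : u (c • vstar) = vstar := by
      rw [ContinuousLinearMap.map_smul, huvst, smul_smul, hcdef, inv_mul_cancel₀ hlamσ, one_smul]
    have h2 : G vstar (u (c • vstar)) = c • vstar := by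
      have h3 : G vstar (u (c • vstar)) = (G vstar * u) (c • vstar) := rfl
      rw [h3, hGdef]
      simp only
      rw [← hudef, Ring.inverse_mul_cancel u hu_is, ContinuousLinearMap.one_apply]
    calc G vstar vstar = G vstar (u (c • vstar)) := by rw [h1]
    _ = c • vstar := h2
  -- smoothness of G
  have hsubc : ContDiffAt ℝ 2 (fun v => L v - σ • 1) vstar := hLc.sub contDiffAt_const
  have hGc : ContDiffAt ℝ 2 G vstar := by
    have h2 : ContDiffAt ℝ 2 (Ring.inverse :
        (EuclideanSpace ℝ (Fin n) →L[ℝ] EuclideanSpace ℝ (Fin n)) → _)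
        ((fun v => L v - σ • 1) vstar) := by
      have := contDiffAt_ringInverse ℝ (n := 2) U
      rw [hU] at this
      simpa [hudef] using this
    exact h2.comp vstar hsubc
  set ψ : EuclideanSpace ℝ (Fin n) → EuclideanSpace ℝ (Fin n) := fun v => G v v with hψdef
  have hψc : ContDiffAt ℝ 2 ψ vstar := hGc.clm_apply contDiffAt_id
  have hψeq : invitPsi J σ =ᶠ[𝓝 vstar] ψ := by
    filter_upwards [hopen.mem_nhds hvne] with v hv
    show invitPsi J σ v = G v v
    unfold invitPsi
    have hm : mvCLM (J v - σ • (1 : Matrix (Fin n) (Fin n) ℝ)) = L v - σ • 1 := by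
      rw [mvCLM_sub, mvCLM_smul, mvCLM_one, hLJ v hv]; rfl
    rw [mvCLM_ring_inverse, hm, hGdef]
  -- derivative of ψ at vstar is G vstar
  have hsubd : HasFDerivAt (fun v => L v - σ • 1) DL vstar :=
    hLd.hasFDerivAt.sub_const
      (σ • (1 : EuclideanSpace ℝ (Fin n) →L[ℝ] EuclideanSpace ℝ (Fin n)))
  have hinvd := hasFDerivAt_ringInverse (𝕜 := ℝ) U
  rw [hU] at hinvd
  have hGd : HasFDerivAt G _ vstar := HasFDerivAt.comp (g := Ring.inverse) (f := fun v => L v - σ • 1) vstar hinvd hsubd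
  have hψd : HasFDerivAt ψ (G vstar) vstar := by
    have h1 := hGd.clm_apply (hasFDerivAt_id vstar)
    have hUv : ((U⁻¹ : _ˣ) : EuclideanSpace ℝ (Fin n) →L[ℝ] EuclideanSpace ℝ (Fin n)) vstar
        = c • vstar := by rw [← hGu]; exact hGvst
    refine h1.congr_fderiv ?_
    symm
    ext h
    simp only [ContinuousLinearMap.add_apply, ContinuousLinearMap.comp_apply,
      ContinuousLinearMap.coe_id', id_eq, ContinuousLinearMap.flip_apply,
      ContinuousLinearMap.neg_apply, ContinuousLinearMap.mulLeftRight_apply]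
    rw [ContinuousLinearMap.mul_apply, ContinuousLinearMap.mul_apply, hUv,
      ContinuousLinearMap.map_smul, hDL0 h]
    simp
  -- φ and its derivative
  set φ : EuclideanSpace ℝ (Fin n) → EuclideanSpace ℝ (Fin n) :=
    fun v => ‖ψ v‖⁻¹ • ψ v with hφdef
  have hψvst : ψ vstar = c • vstar := hGvst
  have hψne : ψ vstar ≠ 0 := by
    rw [hψvst]; exact smul_ne_zero hc hvne
  have hnψ : ‖ψ vstar‖ = |c| := by
    rw [hψvst, norm_smul, hnorm, mul_one, Real.norm_eq_abs]
  have habs : |c| ≠ 0 := abs_ne_zero.mpr hc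
  have hφc : ContDiffAt ℝ 2 φ vstar := by
    refine ContDiffAt.smul (((hψc.norm ℝ hψne).inv ?_)) hψc
    rw [hnψ]; exact habs
  -- value of φ at vstar
  have hφvst : φ vstar = s • vstar := by
    rw [hφdef]
    simp only
    rw [hψvst, norm_smul, hnorm, mul_one, Real.norm_eq_abs, smul_smul]
    rcases lt_or_gt_of_ne hσ with hlt | hgt
    · have hcpos : 0 < c := by rw [hcdef]; exact inv_pos.mpr (sub_pos.mpr hlt)
      rw [abs_of_pos hcpos, inv_mul_cancel₀ (ne_of_gt hcpos), hs₁ hlt]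
    · have hcneg : c < 0 := by
        rw [hcdef]
        exact inv_neg''.mpr (sub_neg.mpr hgt)
      rw [abs_of_neg hcneg, hs₂ hgt]
      congr 1
      field_simp
  -- derivative of the norm of ψ
  set r2 : EuclideanSpace ℝ (Fin n) → ℝ := fun v => ⟪ψ v, ψ v⟫ with hr2def
  have hr2vst : r2 vstar = c ^ 2 := by
    rw [hr2def]
    simp only
    rw [hψvst, real_inner_smul_left, real_inner_smul_right,
      real_inner_self_eq_norm_sq, hnorm]
    ring
  have hr2d : HasFDerivAt r2 ((fderivInnerCLM ℝ (ψ vstar, ψ vstar)).comp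
      ((G vstar).prod (G vstar))) vstar := HasFDerivAt.inner ℝ hψd hψd
  have hsqd : HasDerivAt Real.sqrt (1 / (2 * Real.sqrt (r2 vstar))) (r2 vstar) :=
    Real.hasDerivAt_sqrt (by rw [hr2vst]; exact pow_ne_zero 2 hc)
  have hnormd : HasFDerivAt (fun v => ‖ψ v‖)
      ((1 / (2 * Real.sqrt (r2 vstar))) • ((fderivInnerCLM ℝ (ψ vstar, ψ vstar)).comp
      ((G vstar).prod (G vstar)))) vstar := by
    have h1 := hsqd.comp_hasFDerivAt vstar hr2d
    have h2 : Real.sqrt ∘ r2 = fun v => ‖ψ v‖ := by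
      funext v
      show Real.sqrt (r2 v) = ‖ψ v‖
      rw [hr2def]
      simp only
      rw [real_inner_self_eq_norm_sq, Real.sqrt_sq (norm_nonneg _)]
    rwa [h2] at h1
  have hnormne : ‖ψ vstar‖ ≠ 0 := by rw [hnψ]; exact habs
  have hinvn : HasDerivAt (fun y : ℝ => y⁻¹) (-(‖ψ vstar‖ ^ 2)⁻¹) ‖ψ vstar‖ := by
    simpa using hasDerivAt_inv hnormne
  have hninv : HasFDerivAt (fun v => ‖ψ v‖⁻¹)
      ((-(‖ψ vstar‖ ^ 2)⁻¹) • ((1 / (2 * Real.sqrt (r2 vstar))) •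
        ((fderivInnerCLM ℝ (ψ vstar, ψ vstar)).comp ((G vstar).prod (G vstar))))) vstar := by
    have h1 := hinvn.comp_hasFDerivAt vstar hnormd
    exact h1
  have hφd : HasFDerivAt φ
      (‖ψ vstar‖⁻¹ • (G vstar) + ((-(‖ψ vstar‖ ^ 2)⁻¹) • ((1 / (2 * Real.sqrt (r2 vstar))) •
        ((fderivInnerCLM ℝ (ψ vstar, ψ vstar)).comp ((G vstar).prod (G vstar))))).smulRight
        (ψ vstar)) vstar := hninv.smul hψd
  -- identify the derivative with the target operator T
  set T := mvCLM (|lam - σ| •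
      ((1 - Matrix.vecMulVec vstar vstar) * (J vstar - σ • 1)⁻¹)) with hTdef
  have hGmv : mvCLM ((J vstar - σ • (1 : Matrix (Fin n) (Fin n) ℝ))⁻¹) = G vstar := by
    rw [mvCLM_ring_inverse, h_u_eq, hGdef]
  have hTG : ∀ h, T h = |lam - σ| • (G vstar h - ⟪vstar, G vstar h⟫ • vstar) := by
    intro h
    rw [hTdef, mvCLM_smul, mvCLM_mul, ContinuousLinearMap.smul_apply,
      ContinuousLinearMap.comp_apply, hGmv, mvCLM_sub, mvCLM_one,
      ContinuousLinearMap.sub_apply, mvCLM_vecMulVec, ContinuousLinearMap.id_apply]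
  have hdne : |lam - σ| ≠ 0 := abs_ne_zero.mpr hlamσ
  have hcabs : |c| = |lam - σ|⁻¹ := by rw [hcdef, abs_inv]
  have hφd' : HasFDerivAt φ T vstar := by
    convert hφd using 1
    refine ContinuousLinearMap.ext fun h => ?_
    rw [hTG h]
    simp only [ContinuousLinearMap.add_apply, ContinuousLinearMap.smul_apply,
      ContinuousLinearMap.smulRight_apply, ContinuousLinearMap.comp_apply,
      ContinuousLinearMap.prod_apply, fderivInnerCLM_apply]
    rw [hnψ, hr2vst, Real.sqrt_sq_eq_abs, hcabs, hψvst]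
    rw [real_inner_smul_left, real_inner_smul_right,
      real_inner_comm (G vstar h) vstar]
    rw [smul_smul, smul_sub, smul_smul]
    have hc2 : c * c = |lam - σ|⁻¹ * |lam - σ|⁻¹ := by
      rw [← abs_mul_abs_self c, hcabs]
    match_scalars
    · field_simp
    · simp only [smul_eq_mul]
      rw [hcdef]
      field_simp
      ring_nf
      rw [sq_abs]; ring
  -- assemble
  have hfder : fderiv ℝ φ vstar = T := hφd'.fderiv
  have htay := taylor_sq hφc
  rw [hfder, hφvst] at htay
  have hphieq : ∀ᶠ v in 𝓝 vstar, invitPhi J σ v = φ v := by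
    filter_upwards [hψeq] with v hv
    unfold invitPhi
    rw [hv]
  refine htay.congr' ?_ Filter.EventuallyEq.rfl
  filter_upwards [hphieq] with v hv
  rw [hv]
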